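/- arXiv:0807.2108 — 2 statements merged into one kernel-verified Lean document; each statement's English description precedes it below -/
import Mathlib

section
/- Under the v-continuity domain decomposition method, the energy ∑_{i=1}^S v_i(n)ᵀ·A_i·v_i(n) is non-increasing in n: for all n ∈ ℕ, ∑_{i=1}^S v_i(n+1)ᵀ·A_i·v_i(n+1) ≤ ∑_{i=1}^S v_i(n)ᵀ·A_i·v_i(n). -/
open Matrix

/-- Cross-term symmetry for a Hermitian real matrix. -/
lemma symm_cross {k : ℕ} (Q : Matrix (Fin k) (Fin k) ℝ) (hQ : Q.IsHermitian)
    (a b : Fin k → ℝ) : a ⬝ᵥ Q.mulVec b = b ⬝ᵥ Q.mulVec a := by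
  have hQt : Qᵀ = Q := by
    ext i j; simpa using (congrFun (congrFun hQ.eq j) i).symm
  rw [dotProduct_mulVec, ← mulVec_transpose, hQt, dotProduct_comm]

/-- Dot product of a finite sum on the left. -/
lemma sum_dotProduct' {ι : Type*} (s : Finset ι) {k : ℕ}
    (g : ι → Fin k → ℝ) (w : Fin k → ℝ) :
    (∑ i ∈ s, g i) ⬝ᵥ w = ∑ i ∈ s, g i ⬝ᵥ w := by
  simp only [dotProduct, Finset.sum_apply, Finset.sum_mul]
  exact Finset.sum_comm

/-- Under the v-continuity domain decomposition method (subdomain equation, trapezoidal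
update, and v-continuity constraint, with zero external forcing), the energy
`∑ᵢ vᵢ(n)ᵀ·Aᵢ·vᵢ(n)` with `Aᵢ = Mᵢ + (γ - 1/2)·Δt·Kᵢ` is non-increasing in `n`. -/
theorem vContinuity_energy_nonincreasing
    (S m : ℕ) (hS : 1 ≤ S) (nn : Fin S → ℕ)
    (M K : ∀ i : Fin S, Matrix (Fin (nn i)) (Fin (nn i)) ℝ)
    (hM : ∀ i, (M i).PosDef) (hK : ∀ i, (K i).PosSemidef)
    (C : ∀ i : Fin S, Matrix (Fin m) (Fin (nn i)) ℝ)
    (Δt γ : ℝ) (hΔt : 0 < Δt) (hγ₀ : 0 ≤ γ) (hγ₁ : γ ≤ 1)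
    (d v : ∀ i : Fin S, ℕ → (Fin (nn i) → ℝ)) (lam : ℕ → (Fin m → ℝ))
    (heq : ∀ i n, (M i).mulVec (v i n) + (K i).mulVec (d i n) = (C i)ᵀ.mulVec (lam n))
    (hupd : ∀ i n, d i (n + 1) = d i n + Δt • ((1 - γ) • v i n + γ • v i (n + 1)))
    (hcont : ∀ n, ∑ i : Fin S, (C i).mulVec (v i n) = 0) :
    ∀ n : ℕ,
      ∑ i : Fin S, v i (n + 1) ⬝ᵥ (M i + ((γ - 1/2) * Δt) • K i).mulVec (v i (n + 1)) ≤
        ∑ i : Fin S, v i n ⬝ᵥ (M i + ((γ - 1/2) * Δt) • K i).mulVec (v i n) := by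
  intro n
  -- per-subdomain energy difference identity
  have key : ∀ i : Fin S,
      v i (n + 1) ⬝ᵥ (M i + ((γ - 1/2) * Δt) • K i).mulVec (v i (n + 1))
        - v i n ⬝ᵥ (M i + ((γ - 1/2) * Δt) • K i).mulVec (v i n)
      = ((C i).mulVec (v i (n + 1) + v i n)) ⬝ᵥ (lam (n + 1) - lam n)
        - (Δt / 2) * ((v i (n + 1) + v i n) ⬝ᵥ
            (K i).mulVec (v i (n + 1) + v i n)) := by
    intro i
    set a := v i n with ha
    set b := v i (n + 1) with hb
    -- vector equation from differencing the subdomain equations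
    have hveq : (M i).mulVec b - (M i).mulVec a
        + (Δt * (1 - γ)) • (K i).mulVec a + (Δt * γ) • (K i).mulVec b
        = (C i)ᵀ.mulVec (lam (n + 1) - lam n) := by
      have h1 := heq i (n + 1)
      have h2 := heq i n
      rw [hupd i n] at h1
      have := congrArg₂ (· - ·) h1 h2
      simp only [mulVec_add, mulVec_smul, smul_add, smul_smul] at this
      rw [← ha, ← hb] at this
      rw [mulVec_sub]
      linear_combination (norm := module) this
    -- scalar equation: dot with b + a
    have hscalar := congrArg (fun x => (b + a) ⬝ᵥ x) hveq
    simp only [dotProduct_add, dotProduct_sub, dotProduct_smul, add_dotProduct,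
      smul_eq_mul] at hscalar
    -- symmetry cross terms
    have mab : a ⬝ᵥ (M i).mulVec b = b ⬝ᵥ (M i).mulVec a :=
      symm_cross _ (hM i).isHermitian a b
    have kab : a ⬝ᵥ (K i).mulVec b = b ⬝ᵥ (K i).mulVec a :=
      symm_cross _ (hK i).isHermitian a b
    -- the transpose-dot term equals the constraint-side term
    have hCT : (b + a) ⬝ᵥ (C i)ᵀ.mulVec (lam (n + 1) - lam n)
        = ((C i).mulVec (b + a)) ⬝ᵥ (lam (n + 1) - lam n) := by
      rw [dotProduct_mulVec, vecMul_transpose]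
    rw [add_dotProduct, mulVec_add, add_dotProduct] at hCT
    simp only [add_mulVec, smul_mulVec, dotProduct_add, dotProduct_smul,
      smul_eq_mul, mulVec_add, add_dotProduct]
    linear_combination hscalar - mab + hCT + (Δt / 2 - γ * Δt) * kab
  -- sum the identity over subdomains
  have hsum : (∑ i : Fin S, v i (n + 1) ⬝ᵥ (M i + ((γ - 1/2) * Δt) • K i).mulVec (v i (n + 1)))
      - ∑ i : Fin S, v i n ⬝ᵥ (M i + ((γ - 1/2) * Δt) • K i).mulVec (v i n)
      = (∑ i : Fin S, (C i).mulVec (v i (n + 1) + v i n)) ⬝ᵥ (lam (n + 1) - lam n)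
        - (Δt / 2) * ∑ i : Fin S, (v i (n + 1) + v i n) ⬝ᵥ
            (K i).mulVec (v i (n + 1) + v i n) := by
    rw [← Finset.sum_sub_distrib, Finset.sum_congr rfl fun i _ => key i,
      Finset.sum_sub_distrib, sum_dotProduct' _ _ _, Finset.mul_sum]
  have hC0 : (∑ i : Fin S, (C i).mulVec (v i (n + 1) + v i n)) = 0 := by
    simp only [mulVec_add, Finset.sum_add_distrib, hcont n, hcont (n + 1), add_zero]
  have hKs : 0 ≤ ∑ i : Fin S, (v i (n + 1) + v i n) ⬝ᵥ
      (K i).mulVec (v i (n + 1) + v i n) :=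
    Finset.sum_nonneg fun i _ => (hK i).re_dotProduct_nonneg _
  rw [← sub_nonpos, hsum, hC0, zero_dotProduct, zero_sub, neg_nonpos]
  exact mul_nonneg (by linarith) hKs
end

section
/- The jump in the Lagrange multipliers is determined by the jumps in the subdomain quantities: if for all i ∈ {1,…,S} and all n ∈ ℕ the subdomain equation M_i·v_i(n) + K_i·d_i(n) = C_iᵀ·λ(n) holds (zero external forcing), and the constraints are linearly independent, then for all n ∈ ℕ, λ(n+1) − λ(n) = G⁻¹·∑_{i=1}^S C_i·M̃_i⁻¹·(M_i·(v_i(n+1) − v_i(n)) + K_i·(d_i(n+1) − d_i(n))), where M̃_i := M_i + γ·Δt·K_i and G := ∑_{i=1}^S C_i·M̃_i⁻¹·C_iᵀ. Consequently, if the sequences (v_i(n)) and (d_i(n+1) − d_i(n)) are bounded, then (λ(n+1) − λ(n)) is bounded. -/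
open Matrix

/-- The Euclidean norm of a vector indexed by `Fin k`. -/
noncomputable def enorm {k : ℕ} (x : Fin k → ℝ) : ℝ := Real.sqrt (x ⬝ᵥ x)

/-- Frobenius norm of a matrix. -/
noncomputable def frob {p q : ℕ} (A : Matrix (Fin p) (Fin q) ℝ) : ℝ :=
  Real.sqrt (∑ i, ∑ j, (A i j) ^ 2)

lemma frob_nonneg {p q : ℕ} (A : Matrix (Fin p) (Fin q) ℝ) : 0 ≤ frob A :=
  Real.sqrt_nonneg _

lemma enorm_eq_norm {k : ℕ} (x : Fin k → ℝ) :
    _root_.enorm x = ‖(WithLp.equiv 2 (Fin k → ℝ)).symm x‖ := by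
  rw [_root_.enorm, EuclideanSpace.norm_eq]
  congr 1
  simp [dotProduct, sq, Real.norm_eq_abs, abs_mul_abs_self]

lemma enorm_nonneg {k : ℕ} (x : Fin k → ℝ) : 0 ≤ _root_.enorm x := Real.sqrt_nonneg _

lemma euc_enorm_add_le {k : ℕ} (x y : Fin k → ℝ) : _root_.enorm (x + y) ≤ _root_.enorm x + _root_.enorm y := by
  simp only [enorm_eq_norm]
  rw [show (WithLp.equiv 2 (Fin k → ℝ)).symm (x + y)
      = (WithLp.equiv 2 (Fin k → ℝ)).symm x + (WithLp.equiv 2 (Fin k → ℝ)).symm y from rfl]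
  exact norm_add_le _ _

lemma euc_enorm_zero {k : ℕ} : _root_.enorm (0 : Fin k → ℝ) = 0 := by simp [_root_.enorm]

lemma euc_enorm_sub_le {k : ℕ} (x y : Fin k → ℝ) : _root_.enorm (x - y) ≤ _root_.enorm x + _root_.enorm y := by
  simp only [enorm_eq_norm]
  rw [show (WithLp.equiv 2 (Fin k → ℝ)).symm (x - y)
      = (WithLp.equiv 2 (Fin k → ℝ)).symm x - (WithLp.equiv 2 (Fin k → ℝ)).symm y from rfl]
  exact norm_sub_le _ _

lemma euc_enorm_sum_le {k : ℕ} {ι : Type*} (s : Finset ι) (f : ι → (Fin k → ℝ)) :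
    _root_.enorm (∑ i ∈ s, f i) ≤ ∑ i ∈ s, _root_.enorm (f i) := by
  classical
  induction s using Finset.induction with
  | empty => simp [euc_enorm_zero]
  | insert _ _ h ih =>
    rw [Finset.sum_insert h, Finset.sum_insert h]
    exact le_trans (euc_enorm_add_le _ _) (by linarith)

/-- Cauchy–Schwarz bound for matrix–vector products. -/
lemma enorm_mulVec_le {p q : ℕ} (A : Matrix (Fin p) (Fin q) ℝ) (x : Fin q → ℝ) :
    _root_.enorm (A *ᵥ x) ≤ frob A * _root_.enorm x := by
  have h1 : (A *ᵥ x) ⬝ᵥ (A *ᵥ x) ≤ (∑ i, ∑ j, (A i j) ^ 2) * (x ⬝ᵥ x) := by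
    have : ∀ i : Fin p, ((A *ᵥ x) i) ^ 2 ≤ (∑ j, (A i j) ^ 2) * (∑ j, (x j) ^ 2) := by
      intro i
      simpa [Matrix.mulVec, dotProduct] using
        Finset.sum_mul_sq_le_sq_mul_sq Finset.univ (fun j => A i j) x
    calc (A *ᵥ x) ⬝ᵥ (A *ᵥ x) = ∑ i, ((A *ᵥ x) i) ^ 2 := by
          simp [dotProduct, sq]
      _ ≤ ∑ i, (∑ j, (A i j) ^ 2) * (∑ j, (x j) ^ 2) :=
          Finset.sum_le_sum fun i _ => this i
      _ = (∑ i, ∑ j, (A i j) ^ 2) * (x ⬝ᵥ x) := by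
          rw [← Finset.sum_mul]; congr 1; simp [dotProduct, sq]
  calc _root_.enorm (A *ᵥ x) = Real.sqrt ((A *ᵥ x) ⬝ᵥ (A *ᵥ x)) := rfl
    _ ≤ Real.sqrt ((∑ i, ∑ j, (A i j) ^ 2) * (x ⬝ᵥ x)) := Real.sqrt_le_sqrt h1
    _ = frob A * _root_.enorm x := by
        rw [Real.sqrt_mul (by positivity)]; rfl

lemma sum_mulVec' {p q : ℕ} {ι : Type*} (s : Finset ι)
    (A : ι → Matrix (Fin p) (Fin q) ℝ) (x : Fin q → ℝ) :
    (∑ i ∈ s, A i) *ᵥ x = ∑ i ∈ s, (A i *ᵥ x) := by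
  classical
  induction s using Finset.induction with
  | empty => simp
  | insert _ _ h ih => simp [Finset.sum_insert h, Matrix.add_mulVec, ih]

/-- The jump in the Lagrange multipliers is determined by the jumps in the subdomain
quantities:
`λ(n+1) - λ(n) = G⁻¹·∑ᵢ Cᵢ·M̃ᵢ⁻¹·(Mᵢ·(vᵢ(n+1) - vᵢ(n)) + Kᵢ·(dᵢ(n+1) - dᵢ(n)))`,
where `M̃ᵢ = Mᵢ + γ·Δt·Kᵢ` and `G = ∑ᵢ Cᵢ·M̃ᵢ⁻¹·Cᵢᵀ`. Consequently, if the rates and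
the temperature jumps are bounded, then the multiplier jumps are bounded. -/
theorem lagrange_multiplier_jump_formula
    (S m : ℕ) (hS : 1 ≤ S) (nn : Fin S → ℕ)
    (M K : ∀ i : Fin S, Matrix (Fin (nn i)) (Fin (nn i)) ℝ)
    (hM : ∀ i, (M i).PosDef) (hK : ∀ i, (K i).PosSemidef)
    (C : ∀ i : Fin S, Matrix (Fin m) (Fin (nn i)) ℝ)
    (Δt γ : ℝ) (hΔt : 0 < Δt) (hγ₀ : 0 ≤ γ) (hγ₁ : γ ≤ 1)
    (d v : ∀ i : Fin S, ℕ → (Fin (nn i) → ℝ)) (lam : ℕ → (Fin m → ℝ))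
    (heq : ∀ i n, (M i).mulVec (v i n) + (K i).mulVec (d i n) = (C i)ᵀ.mulVec (lam n))
    (hind : ∀ μ : Fin m → ℝ, (∀ i, (C i)ᵀ.mulVec μ = 0) → μ = 0) :
    (∀ n : ℕ,
      lam (n + 1) - lam n =
        (∑ i : Fin S, C i * (M i + (γ * Δt) • K i)⁻¹ * (C i)ᵀ)⁻¹.mulVec
          (∑ i : Fin S,
            (C i * (M i + (γ * Δt) • K i)⁻¹).mulVec
              ((M i).mulVec (v i (n + 1) - v i n) +
                (K i).mulVec (d i (n + 1) - d i n)))) ∧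
    ((∃ C₁ > (0 : ℝ), ∀ i : Fin S, ∀ n : ℕ, _root_.enorm (v i n) ≤ C₁) →
      (∃ C₂ > (0 : ℝ), ∀ i : Fin S, ∀ n : ℕ, _root_.enorm (d i (n + 1) - d i n) ≤ C₂) →
      ∃ C₃ > (0 : ℝ), ∀ n : ℕ, _root_.enorm (lam (n + 1) - lam n) ≤ C₃) := by
  classical
  set Mt : ∀ i : Fin S, Matrix (Fin (nn i)) (Fin (nn i)) ℝ :=
    fun i => M i + (γ * Δt) • K i with hMt
  -- positivity of M̃ᵢ
  have hγΔt : 0 ≤ γ * Δt := mul_nonneg hγ₀ hΔt.le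
  have hKsmul : ∀ i, ((γ * Δt) • K i).PosSemidef := by
    intro i
    refine Matrix.PosSemidef.of_dotProduct_mulVec_nonneg ?_ (fun x => ?_)
    · rw [Matrix.IsHermitian, conjTranspose_smul, star_trivial, (hK i).1.eq]
    · rw [Matrix.smul_mulVec, dotProduct_smul]
      have := (hK i).dotProduct_mulVec_nonneg x
      simp only [star_trivial] at this ⊢
      exact smul_nonneg hγΔt this
  have hMtpos : ∀ i, (Mt i).PosDef := fun i => (hM i).add_posSemidef (hKsmul i)
  have hMtinv : ∀ i, ((Mt i)⁻¹).PosDef := fun i => (hMtpos i).inv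
  set G : Matrix (Fin m) (Fin m) ℝ := ∑ i : Fin S, C i * (Mt i)⁻¹ * (C i)ᵀ with hG
  -- each term of G is PosSemidef
  have hterm : ∀ i : Fin S, (C i * (Mt i)⁻¹ * (C i)ᵀ).PosSemidef := by
    intro i
    have := (hMtinv i).posSemidef.mul_mul_conjTranspose_same (C i)
    simpa using this
  have hGsemi : G.PosSemidef := by
    rw [hG]
    induction (Finset.univ : Finset (Fin S)) using Finset.induction with
    | empty => simp [Matrix.PosSemidef.zero]
    | insert _ _ h ih =>
      rw [Finset.sum_insert h]
      exact (hterm _).add ih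
  -- definiteness of G
  have hGpos : G.PosDef := by
    refine Matrix.PosDef.of_dotProduct_mulVec_pos hGsemi.1 (fun x hx => ?_)
    obtain ⟨i₀, hi₀⟩ : ∃ i, (C i)ᵀ *ᵥ x ≠ 0 := by
      by_contra h
      push_neg at h
      exact hx (hind x h)
    have hquad : ∀ i : Fin S, x ⬝ᵥ (C i * (Mt i)⁻¹ * (C i)ᵀ) *ᵥ x
        = ((C i)ᵀ *ᵥ x) ⬝ᵥ ((Mt i)⁻¹ *ᵥ ((C i)ᵀ *ᵥ x)) := by
      intro i
      rw [← Matrix.mulVec_mulVec, ← Matrix.mulVec_mulVec, Matrix.mulVec_transpose,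
        Matrix.dotProduct_mulVec]
    have hsum : x ⬝ᵥ G *ᵥ x = ∑ i : Fin S, x ⬝ᵥ (C i * (Mt i)⁻¹ * (C i)ᵀ) *ᵥ x := by
      rw [hG, sum_mulVec']
      simp only [dotProduct, Finset.sum_apply, Finset.mul_sum]
      rw [Finset.sum_comm]
    simp only [star_trivial]
    rw [hsum]
    refine Finset.sum_pos' (fun i _ => ?_) ⟨i₀, Finset.mem_univ i₀, ?_⟩
    · have := (hterm i).dotProduct_mulVec_nonneg x
      simpa using this
    · rw [hquad i₀]
      have := (hMtinv i₀).dotProduct_mulVec_pos hi₀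
      simpa using this
  have hGdet : IsUnit G.det := (Matrix.isUnit_iff_isUnit_det G).mp hGpos.isUnit
  -- the key per-subdomain identity
  have hkey : ∀ i (n : ℕ),
      (M i) *ᵥ (v i (n + 1) - v i n) + (K i) *ᵥ (d i (n + 1) - d i n)
        = (C i)ᵀ *ᵥ (lam (n + 1) - lam n) := by
    intro i n
    rw [Matrix.mulVec_sub, Matrix.mulVec_sub, Matrix.mulVec_sub]
    have h1 := heq i (n + 1)
    have h2 := heq i n
    rw [← h1, ← h2]
    abel
  have hformula : ∀ n : ℕ,
      lam (n + 1) - lam n =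
        G⁻¹ *ᵥ (∑ i : Fin S, (C i * (Mt i)⁻¹) *ᵥ
          ((M i) *ᵥ (v i (n + 1) - v i n) + (K i) *ᵥ (d i (n + 1) - d i n))) := by
    intro n
    have hsum : (∑ i : Fin S, (C i * (Mt i)⁻¹) *ᵥ
          ((M i) *ᵥ (v i (n + 1) - v i n) + (K i) *ᵥ (d i (n + 1) - d i n)))
        = G *ᵥ (lam (n + 1) - lam n) := by
      rw [hG, sum_mulVec']
      refine Finset.sum_congr rfl fun i _ => ?_
      rw [hkey i n, Matrix.mulVec_mulVec, Matrix.mul_assoc]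
    rw [hsum, Matrix.mulVec_mulVec, Matrix.nonsing_inv_mul G hGdet, Matrix.one_mulVec]
  refine ⟨hformula, ?_⟩
  -- boundedness
  rintro ⟨C₁, hC₁pos, hC₁⟩ ⟨C₂, hC₂pos, hC₂⟩
  set B : Fin S → ℝ := fun i =>
    frob (C i * (Mt i)⁻¹) * (frob (M i) * (C₁ + C₁) + frob (K i) * C₂) with hB
  have hBnn : ∀ i : Fin S, 0 ≤ B i := fun i =>
    mul_nonneg (frob_nonneg _) (add_nonneg
      (mul_nonneg (frob_nonneg _) (by linarith)) (mul_nonneg (frob_nonneg _) hC₂pos.le))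
  have hsumnn : 0 ≤ frob G⁻¹ * ∑ i : Fin S, B i :=
    mul_nonneg (frob_nonneg _) (Finset.sum_nonneg fun i _ => hBnn i)
  refine ⟨frob G⁻¹ * (∑ i : Fin S, B i) + 1, by linarith, fun n => ?_⟩
  rw [hformula n]
  have hstep : ∀ i : Fin S,
      _root_.enorm ((C i * (Mt i)⁻¹) *ᵥ
        ((M i) *ᵥ (v i (n + 1) - v i n) + (K i) *ᵥ (d i (n + 1) - d i n))) ≤ B i := by
    intro i
    refine le_trans (enorm_mulVec_le _ _) ?_
    rw [hB]
    refine mul_le_mul_of_nonneg_left ?_ (frob_nonneg _)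
    refine le_trans (euc_enorm_add_le _ _) (add_le_add ?_ ?_)
    · refine le_trans (enorm_mulVec_le _ _) (mul_le_mul_of_nonneg_left ?_ (frob_nonneg _))
      exact le_trans (euc_enorm_sub_le _ _) (add_le_add (hC₁ i (n + 1)) (hC₁ i n))
    · exact le_trans (enorm_mulVec_le _ _)
        (mul_le_mul_of_nonneg_left (hC₂ i n) (frob_nonneg _))
  calc _root_.enorm (G⁻¹ *ᵥ (∑ i : Fin S, (C i * (Mt i)⁻¹) *ᵥ
          ((M i) *ᵥ (v i (n + 1) - v i n) + (K i) *ᵥ (d i (n + 1) - d i n))))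
      ≤ frob G⁻¹ * _root_.enorm (∑ i : Fin S, (C i * (Mt i)⁻¹) *ᵥ
          ((M i) *ᵥ (v i (n + 1) - v i n) + (K i) *ᵥ (d i (n + 1) - d i n))) :=
        enorm_mulVec_le _ _
    _ ≤ frob G⁻¹ * (∑ i : Fin S, B i) := by
        refine mul_le_mul_of_nonneg_left ?_ (frob_nonneg _)
        exact le_trans (euc_enorm_sum_le _ _) (Finset.sum_le_sum fun i _ => hstep i)
    _ ≤ frob G⁻¹ * (∑ i : Fin S, B i) + 1 := by linarith
end
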